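/- Let (𝔩 → 𝔥 → 𝔤, ▷, {−,−}) be a 2-crossed module of Lie algebras. Set L₋₂ := 𝔩, L₋₁ := 𝔥, L₀ := 𝔤 (as the Lie algebra 𝔤), μ₁ := t in both degrees, μ₂(a₁,a₂) := [a₁,a₂], μ₂(a,b) := a ▷ b for b ∈ 𝔥, μ₂(a,c) := a ▷ c for c ∈ 𝔩, and μ₂(b₁,b₂) := −{b₁,b₂} − {b₂,b₁} for b₁,b₂ ∈ 𝔥. Then this data is a strict 3-term L∞-algebra; in particular the derived identities hold: μ₁(μ₂(b₁,b₂)) = μ₂(μ₁(b₁),b₂) + μ₂(μ₁(b₂),b₁), i.e. t(−{b₁,b₂} − {b₂,b₁}) = t(b₁) ▷ b₂ + t(b₂) ▷ b₁, and μ₂(μ₁(b),c) = μ₂(b,μ₁(c)), i.e. t(b) ▷ c = −{b,t(c)} − {t(c),b}, together with all the remaining strict 3-term L∞ identities. -/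

import Mathlib

/-- A 2-crossed module of Lie algebras `(𝔩 → 𝔥 → 𝔤, ▷, {−,−})` gives rise to a
strict 3-term L∞-algebra, with `μ₁ := t` in both degrees, `μ₂(a,b) := a ▷ b`,
`μ₂(a,c) := a ▷ c` and the symmetric product `μ₂(b₁,b₂) := −{b₁,b₂} − {b₂,b₁}`.
The conclusion lists all the strict 3-term L∞-algebra identities for this data. -/
theorem two_crossed_module_gives_strict_three_term_Linfty
    {l : Type*} [LieRing l] [LieAlgebra ℝ l]
    {h : Type*} [LieRing h] [LieAlgebra ℝ h]
    {g : Type*} [LieRing g] [LieAlgebra ℝ g]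
    (t₁ : l →ₗ⁅ℝ⁆ h) (t₂ : h →ₗ⁅ℝ⁆ g)
    (h_tt : ∀ c : l, t₂ (t₁ c) = 0)
    (actH : g →ₗ[ℝ] h →ₗ[ℝ] h) (actL : g →ₗ[ℝ] l →ₗ[ℝ] l)
    (h_actH : ∀ (a₁ a₂ : g) (b : h),
      actH ⁅a₁, a₂⁆ b = actH a₁ (actH a₂ b) - actH a₂ (actH a₁ b))
    (h_actL : ∀ (a₁ a₂ : g) (c : l),
      actL ⁅a₁, a₂⁆ c = actL a₁ (actL a₂ c) - actL a₂ (actL a₁ c))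
    (h_derH : ∀ (a : g) (b₁ b₂ : h),
      actH a ⁅b₁, b₂⁆ = ⁅actH a b₁, b₂⁆ + ⁅b₁, actH a b₂⁆)
    (h_derL : ∀ (a : g) (c₁ c₂ : l),
      actL a ⁅c₁, c₂⁆ = ⁅actL a c₁, c₂⁆ + ⁅c₁, actL a c₂⁆)
    (h_equivL : ∀ (a : g) (c : l), t₁ (actL a c) = actH a (t₁ c))
    (h_equivH : ∀ (a : g) (b : h), t₂ (actH a b) = ⁅a, t₂ b⁆)
    (pf : h →ₗ[ℝ] h →ₗ[ℝ] l)
    (h_pf_equiv : ∀ (a : g) (b₁ b₂ : h),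
      actL a (pf b₁ b₂) = pf (actH a b₁) b₂ + pf b₁ (actH a b₂))
    (h_pf₁ : ∀ b₁ b₂ : h, t₁ (pf b₁ b₂) = ⁅b₁, b₂⁆ - actH (t₂ b₁) b₂)
    (h_pf₂ : ∀ c₁ c₂ : l, pf (t₁ c₁) (t₁ c₂) = ⁅c₁, c₂⁆)
    (h_pf₃ : ∀ b₁ b₂ b₃ : h,
      pf b₁ ⁅b₂, b₃⁆ = pf (t₁ (pf b₁ b₂)) b₃ - pf (t₁ (pf b₁ b₃)) b₂)
    (h_pf₄ : ∀ b₁ b₂ b₃ : h,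
      pf ⁅b₁, b₂⁆ b₃ = actL (t₂ b₁) (pf b₂ b₃) + pf b₁ ⁅b₂, b₃⁆
        - actL (t₂ b₂) (pf b₁ b₃) - pf b₂ ⁅b₁, b₃⁆)
    (h_pf₅ : ∀ (b : h) (c : l), - actL (t₂ b) c = pf (t₁ c) b + pf b (t₁ c)) :
    -- μ₁ ∘ μ₁ = 0
    (∀ c : l, t₂ (t₁ c) = 0) ∧
    -- μ₂([a₁,a₂],x) = μ₂(a₁,μ₂(a₂,x)) − μ₂(a₂,μ₂(a₁,x)) for x ∈ L₋₁ and x ∈ L₋₂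
    (∀ (a₁ a₂ : g) (b : h),
      actH ⁅a₁, a₂⁆ b = actH a₁ (actH a₂ b) - actH a₂ (actH a₁ b)) ∧
    (∀ (a₁ a₂ : g) (c : l),
      actL ⁅a₁, a₂⁆ c = actL a₁ (actL a₂ c) - actL a₂ (actL a₁ c)) ∧
    -- μ₁(μ₂(a,b)) = [a, μ₁(b)] for b ∈ L₋₁
    (∀ (a : g) (b : h), t₂ (actH a b) = ⁅a, t₂ b⁆) ∧
    -- μ₁(μ₂(a,c)) = μ₂(a,μ₁(c)) for c ∈ L₋₂
    (∀ (a : g) (c : l), t₁ (actL a c) = actH a (t₁ c)) ∧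
    -- the product μ₂ : L₋₁ × L₋₁ → L₋₂, μ₂(b₁,b₂) = −{b₁,b₂} − {b₂,b₁}, is symmetric
    (∀ b₁ b₂ : h, - pf b₁ b₂ - pf b₂ b₁ = - pf b₂ b₁ - pf b₁ b₂) ∧
    -- μ₁(μ₂(b₁,b₂)) = μ₂(μ₁(b₁),b₂) + μ₂(μ₁(b₂),b₁), i.e.
    -- t(−{b₁,b₂} − {b₂,b₁}) = t(b₁) ▷ b₂ + t(b₂) ▷ b₁
    (∀ b₁ b₂ : h,
      t₁ (- pf b₁ b₂ - pf b₂ b₁) = actH (t₂ b₁) b₂ + actH (t₂ b₂) b₁) ∧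
    -- μ₂(μ₁(b),c) = μ₂(b,μ₁(c)), i.e. t(b) ▷ c = −{b,t(c)} − {t(c),b}
    (∀ (b : h) (c : l), actL (t₂ b) c = - pf b (t₁ c) - pf (t₁ c) b) ∧
    -- μ₂(a,μ₂(b₁,b₂)) = μ₂(μ₂(a,b₁),b₂) + μ₂(b₁,μ₂(a,b₂))
    (∀ (a : g) (b₁ b₂ : h),
      actL a (- pf b₁ b₂ - pf b₂ b₁)
        = (- pf (actH a b₁) b₂ - pf b₂ (actH a b₁))
          + (- pf b₁ (actH a b₂) - pf (actH a b₂) b₁)) := by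
  refine ⟨h_tt, h_actH, h_actL, h_equivH, h_equivL, ?_, ?_, ?_, ?_⟩
  · intro b₁ b₂; abel
  · intro b₁ b₂
    rw [map_sub t₁, map_neg t₁, h_pf₁, h_pf₁, ← lie_skew b₂ b₁]
    abel
  · intro b c
    have := h_pf₅ b c
    linear_combination (norm := module) -this
  · intro a b₁ b₂
    simp only [map_sub, map_neg, h_pf_equiv]
    abel
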